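/- Let the sequences {w^k} and {w̃^k} be generated by GS-ADMM with τ + s > 0. Then for every k and every w* ∈ M*: ‖w^{k+1} − w*‖_H² ≤ ‖w^k − w*‖_H² − ‖w^k − w̃^k‖_G². -/

import Mathlib

open scoped RealInnerProductSpace
open Matrix Filter

/-- Multiplication of a matrix with a vector, viewed as a map between Euclidean spaces. -/
noncomputable def mv {n m : ℕ} (M : Matrix (Fin n) (Fin m) ℝ)
    (v : EuclideanSpace ℝ (Fin m)) : EuclideanSpace ℝ (Fin n) :=
  WithLp.toLp 2 (M.mulVec v)

/-- `sA A x = Σ_i A_i x_i`. -/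
noncomputable def sA {p n : ℕ} {m : Fin p → ℕ}
    (A : ∀ i, Matrix (Fin n) (Fin (m i)) ℝ)
    (x : ∀ i, EuclideanSpace ℝ (Fin (m i))) : EuclideanSpace ℝ (Fin n) :=
  ∑ i, mv (A i) (x i)

/-- The augmented Lagrangian
`L_β(x,y,λ) = Σ_i f_i(x_i) + Σ_j g_j(y_j) − ⟨λ, Ax + By − c⟩ + (β/2)‖Ax + By − c‖²`. -/
noncomputable def Lag {p q n : ℕ} {m : Fin p → ℕ} {d : Fin q → ℕ}
    (A : ∀ i, Matrix (Fin n) (Fin (m i)) ℝ)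
    (B : ∀ j, Matrix (Fin n) (Fin (d j)) ℝ)
    (c : EuclideanSpace ℝ (Fin n))
    (f : ∀ i, EuclideanSpace ℝ (Fin (m i)) → ℝ)
    (g : ∀ j, EuclideanSpace ℝ (Fin (d j)) → ℝ)
    (β : ℝ)
    (x : ∀ i, EuclideanSpace ℝ (Fin (m i)))
    (y : ∀ j, EuclideanSpace ℝ (Fin (d j)))
    (lam : EuclideanSpace ℝ (Fin n)) : ℝ :=
  (∑ i, f i (x i)) + (∑ j, g j (y j)) - ⟪lam, sA A x + sA B y - c⟫
    + β / 2 * ‖sA A x + sA B y - c‖ ^ 2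

/-- The `H`-quadratic form `‖(x,y,λ)‖_H²`. -/
noncomputable def Hform {p q n : ℕ} {m : Fin p → ℕ} {d : Fin q → ℕ}
    (A : ∀ i, Matrix (Fin n) (Fin (m i)) ℝ)
    (B : ∀ j, Matrix (Fin n) (Fin (d j)) ℝ)
    (β σ1 σ2 τ s : ℝ)
    (x : ∀ i, EuclideanSpace ℝ (Fin (m i)))
    (y : ∀ j, EuclideanSpace ℝ (Fin (d j)))
    (lam : EuclideanSpace ℝ (Fin n)) : ℝ :=
  β * ((σ1 + 1) * (∑ i, ‖mv (A i) (x i)‖ ^ 2) - ‖sA A x‖ ^ 2)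
    + (σ2 + 1) * β * (∑ j, ‖mv (B j) (y j)‖ ^ 2)
    - τ * s / (τ + s) * β * ‖sA B y‖ ^ 2
    - 2 * τ / (τ + s) * ⟪sA B y, lam⟫
    + 1 / (β * (τ + s)) * ‖lam‖ ^ 2

/-- The `G`-quadratic form `‖(x,y,λ)‖_G²`. -/
noncomputable def Gform {p q n : ℕ} {m : Fin p → ℕ} {d : Fin q → ℕ}
    (A : ∀ i, Matrix (Fin n) (Fin (m i)) ℝ)
    (B : ∀ j, Matrix (Fin n) (Fin (d j)) ℝ)
    (β σ1 σ2 τ s : ℝ)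
    (x : ∀ i, EuclideanSpace ℝ (Fin (m i)))
    (y : ∀ j, EuclideanSpace ℝ (Fin (d j)))
    (lam : EuclideanSpace ℝ (Fin n)) : ℝ :=
  β * ((σ1 + 1) * (∑ i, ‖mv (A i) (x i)‖ ^ 2) - ‖sA A x‖ ^ 2)
    + (σ2 + 1) * β * (∑ j, ‖mv (B j) (y j)‖ ^ 2)
    - s * β * ‖sA B y‖ ^ 2
    + 2 * (s - 1) * ⟪sA B y, lam⟫
    + (2 - τ - s) / β * ‖lam‖ ^ 2

/-- The `H_y`-quadratic form `‖y‖_{H_y}² = β[(σ₂+1)Σ_j‖B_j y_j‖² − ‖By‖²]`. -/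
noncomputable def Hyform {q n : ℕ} {d : Fin q → ℕ}
    (B : ∀ j, Matrix (Fin n) (Fin (d j)) ℝ)
    (β σ2 : ℝ)
    (y : ∀ j, EuclideanSpace ℝ (Fin (d j))) : ℝ :=
  β * ((σ2 + 1) * (∑ j, ‖mv (B j) (y j)‖ ^ 2) - ‖sA B y‖ ^ 2)

/- ## helper lemmas -/

lemma mv_sub {n m : ℕ} (M : Matrix (Fin n) (Fin m) ℝ) (u v : EuclideanSpace ℝ (Fin m)) :
    mv M (u - v) = mv M u - mv M v := by
  simp only [mv]; exact congrArg (WithLp.toLp 2) (Matrix.mulVec_sub M u.ofLp v.ofLp)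

lemma mv_add {n m : ℕ} (M : Matrix (Fin n) (Fin m) ℝ) (u v : EuclideanSpace ℝ (Fin m)) :
    mv M (u + v) = mv M u + mv M v := by
  simp only [mv]; exact congrArg (WithLp.toLp 2) (Matrix.mulVec_add M u.ofLp v.ofLp)

lemma mv_smul {n m : ℕ} (M : Matrix (Fin n) (Fin m) ℝ) (t : ℝ) (u : EuclideanSpace ℝ (Fin m)) :
    mv M (t • u) = t • mv M u := by
  simp only [mv]; exact congrArg (WithLp.toLp 2) (Matrix.mulVec_smul M t u.ofLp)

lemma inner_mv {n m : ℕ} (M : Matrix (Fin n) (Fin m) ℝ) (u : EuclideanSpace ℝ (Fin m))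
    (v : EuclideanSpace ℝ (Fin n)) :
    ⟪mv M u, v⟫ = ⟪u, mv Mᵀ v⟫ := by
  simp only [mv, PiLp.toLp_apply, PiLp.inner_apply, RCLike.inner_apply, conj_trivial, Matrix.mulVec,
    dotProduct, Matrix.transpose_apply, Finset.sum_mul, Finset.mul_sum]
  rw [Finset.sum_comm]
  apply Finset.sum_congr rfl; intros; apply Finset.sum_congr rfl; intros; ring

lemma sA_sub {p n : ℕ} {m : Fin p → ℕ} (A : ∀ i, Matrix (Fin n) (Fin (m i)) ℝ)
    (u v : ∀ i, EuclideanSpace ℝ (Fin (m i))) :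
    sA A (fun i => u i - v i) = sA A u - sA A v := by
  simp only [sA, mv_sub, Finset.sum_sub_distrib]

lemma norm_addsmul {E : Type*} [NormedAddCommGroup E] [InnerProductSpace ℝ E]
    (x y : E) (t : ℝ) : ‖x + t • y‖^2 = ‖x‖^2 + 2*t*⟪x,y⟫ + t^2*‖y‖^2 := by
  rw [norm_add_sq_real, real_inner_smul_right, norm_smul, mul_pow, Real.norm_eq_abs, sq_abs]; ring

lemma pos_limit (Ee C : ℝ) (h : ∀ t : ℝ, 0 < t → t ≤ 1 → 0 ≤ t*Ee + t^2*C) : 0 ≤ Ee := by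
  by_contra hn
  push_neg at hn
  set t : ℝ := min 1 (-Ee/(2*(|C|+1))) with ht
  have hC1 : (0:ℝ) < 2*(|C|+1) := by positivity
  have htpos : 0 < t := lt_min one_pos (div_pos (by linarith) hC1)
  have ht1 : t ≤ 1 := min_le_left _ _
  have ht2 : t ≤ -Ee/(2*(|C|+1)) := min_le_right _ _
  have h2 : t * (2*(|C|+1)) ≤ -Ee := by
    calc t * (2*(|C|+1)) ≤ (-Ee/(2*(|C|+1))) * (2*(|C|+1)) :=
          mul_le_mul_of_nonneg_right ht2 hC1.le
      _ = -Ee := div_mul_cancel₀ _ (ne_of_gt hC1)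
  have hC : C ≤ |C| := le_abs_self C
  have k2 : t*|C| ≤ -Ee/2 := by nlinarith
  have e1 := mul_le_mul_of_nonneg_left k2 htpos.le
  have e2 := mul_le_mul_of_nonneg_left hC (mul_pos htpos htpos).le
  have k1 : t^2*C ≤ t*(-Ee/2) := by nlinarith [e1, e2, sq_nonneg t]
  have e3 := h t htpos ht1
  have e4 := mul_neg_of_pos_of_neg htpos hn
  nlinarith [e3, e4, k1]

lemma psi_expand {E : Type*} [NormedAddCommGroup E] [InnerProductSpace ℝ E]
    (L r w0 w v : E) (β σ t : ℝ) :
    -⟪L, (w + t•v) + r⟫ + β/2*‖(w + t•v) + r‖^2 + σ*β/2*‖(w + t•v) - w0‖^2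
    = (-⟪L, w + r⟫ + β/2*‖w + r‖^2 + σ*β/2*‖w - w0‖^2)
      + t*⟪v, -L + β•(w + r) + σ•(β•(w - w0))⟫ + t^2*((1+σ)*β/2*‖v‖^2) := by
  have h1 : (w + t•v) + r = (w + r) + t•v := by abel
  have h2 : (w + t•v) - w0 = (w - w0) + t•v := by abel
  rw [h1, h2, norm_addsmul, norm_addsmul]
  simp only [inner_add_right, inner_neg_right, real_inner_smul_right, inner_add_left,
    inner_sub_left, inner_sub_right, inner_neg_left]
  simp only [real_inner_comm w v, real_inner_comm r v, real_inner_comm w0 v,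
    real_inner_comm L v]
  ring

lemma sub_vi {n m : ℕ} (T : Matrix (Fin n) (Fin m) ℝ) {X : Set (EuclideanSpace ℝ (Fin m))}
    (hX : Convex ℝ X) {f : EuclideanSpace ℝ (Fin m) → ℝ} (hf : ConvexOn ℝ Set.univ f)
    (β σ : ℝ) (r w0 L : EuclideanSpace ℝ (Fin n))
    {xh : EuclideanSpace ℝ (Fin m)} (hxh : xh ∈ X)
    (hmin : ∀ z ∈ X, f xh - ⟪L, mv T xh + r⟫ + β/2*‖mv T xh + r‖^2 + σ*β/2*‖mv T xh - w0‖^2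
       ≤ f z - ⟪L, mv T z + r⟫ + β/2*‖mv T z + r‖^2 + σ*β/2*‖mv T z - w0‖^2)
    {z : EuclideanSpace ℝ (Fin m)} (hz : z ∈ X) :
    0 ≤ f z - f xh + ⟪mv T z - mv T xh, -L + β•(mv T xh + r) + σ•(β•(mv T xh - w0))⟫ := by
  apply pos_limit _ ((1+σ)*β/2*‖mv T z - mv T xh‖^2)
  intro t ht0 ht1
  have hzt : xh + t•(z - xh) ∈ X := by
    have hmem := hX hxh hz (by linarith : (0:ℝ) ≤ 1 - t) ht0.le (by ring)
    convert hmem using 1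
    rw [smul_sub, sub_smul, one_smul]; abel
  have hcv : f (xh + t•(z-xh)) ≤ f xh + t*(f z - f xh) := by
    have heq : xh + t•(z-xh) = (1-t)•xh + t•z := by
      rw [smul_sub, sub_smul, one_smul]; abel
    have hb := hf.2 (Set.mem_univ xh) (Set.mem_univ z)
      (by linarith : (0:ℝ) ≤ 1 - t) ht0.le (by ring)
    rw [heq]; calc f ((1-t)•xh + t•z) ≤ (1-t)*f xh + t*f z := hb
      _ = f xh + t*(f z - f xh) := by ring
  have hmv : mv T (xh + t•(z-xh)) = mv T xh + t•(mv T z - mv T xh) := by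
    rw [mv_add, mv_smul, mv_sub]
  have hexp := psi_expand L r w0 (mv T xh) (mv T z - mv T xh) β σ t
  have h := hmin _ hzt
  rw [hmv] at h
  have h3 : 0 ≤ t*(f z - f xh) + t*⟪mv T z - mv T xh, -L + β•(mv T xh + r) + σ•(β•(mv T xh - w0))⟫
      + t^2*((1+σ)*β/2*‖mv T z - mv T xh‖^2) := by linarith [hexp, hcv, h]
  calc (0:ℝ) ≤ t*(f z - f xh) + t*⟪mv T z - mv T xh, -L + β•(mv T xh + r) + σ•(β•(mv T xh - w0))⟫
      + t^2*((1+σ)*β/2*‖mv T z - mv T xh‖^2) := h3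
    _ = t*(f z - f xh + ⟪mv T z - mv T xh, -L + β•(mv T xh + r) + σ•(β•(mv T xh - w0))⟫)
      + t^2*((1+σ)*β/2*‖mv T z - mv T xh‖^2) := by ring

lemma sum_comp_update {p : ℕ} {m : Fin p → ℕ} {γ : Type*} [AddCommGroup γ]
    (F : ∀ i, EuclideanSpace ℝ (Fin (m i)) → γ)
    (xk : ∀ i, EuclideanSpace ℝ (Fin (m i))) (i : Fin p) (ξ : EuclideanSpace ℝ (Fin (m i))) :
    ∑ l, F l (Function.update xk i ξ l) = (∑ l, F l (xk l)) - F i (xk i) + F i ξ := by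
  have h1 : ∀ l, F l (Function.update xk i ξ l)
      = Function.update (fun l => F l (xk l)) i (F i ξ) l := by
    intro l
    by_cases hl : l = i
    · subst hl; simp
    · simp [Function.update_of_ne hl]
  rw [Finset.sum_congr rfl (fun l _ => h1 l), Finset.sum_update_of_mem (Finset.mem_univ i)]
  rw [Finset.sdiff_singleton_eq_erase, Finset.sum_erase_eq_sub (Finset.mem_univ i)]
  abel

lemma Lag_update_x {p q n : ℕ} {m : Fin p → ℕ} {d : Fin q → ℕ}
    (A : ∀ i, Matrix (Fin n) (Fin (m i)) ℝ) (B : ∀ j, Matrix (Fin n) (Fin (d j)) ℝ)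
    (c : EuclideanSpace ℝ (Fin n))
    (f : ∀ i, EuclideanSpace ℝ (Fin (m i)) → ℝ) (g : ∀ j, EuclideanSpace ℝ (Fin (d j)) → ℝ)
    (β : ℝ) (xk : ∀ i, EuclideanSpace ℝ (Fin (m i))) (yk : ∀ j, EuclideanSpace ℝ (Fin (d j)))
    (L : EuclideanSpace ℝ (Fin n)) (i : Fin p) (ξ : EuclideanSpace ℝ (Fin (m i))) :
    Lag A B c f g β (Function.update xk i ξ) yk L
      = f i ξ + ((∑ l, f l (xk l)) - f i (xk i) + ∑ j, g j (yk j))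
        - ⟪L, mv (A i) ξ + (sA A xk - mv (A i) (xk i) + sA B yk - c)⟫
        + β / 2 * ‖mv (A i) ξ + (sA A xk - mv (A i) (xk i) + sA B yk - c)‖ ^ 2 := by
  unfold Lag
  rw [sum_comp_update f xk i ξ]
  have hA : sA A (Function.update xk i ξ) = (sA A xk) - mv (A i) (xk i) + mv (A i) ξ := by
    unfold sA; exact sum_comp_update (fun l v => mv (A l) v) xk i ξ
  rw [hA]
  have h2 : sA A xk - mv (A i) (xk i) + mv (A i) ξ + sA B yk - c
      = mv (A i) ξ + (sA A xk - mv (A i) (xk i) + sA B yk - c) := by abel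
  rw [h2]; ring

lemma Lag_update_y {p q n : ℕ} {m : Fin p → ℕ} {d : Fin q → ℕ}
    (A : ∀ i, Matrix (Fin n) (Fin (m i)) ℝ) (B : ∀ j, Matrix (Fin n) (Fin (d j)) ℝ)
    (c : EuclideanSpace ℝ (Fin n))
    (f : ∀ i, EuclideanSpace ℝ (Fin (m i)) → ℝ) (g : ∀ j, EuclideanSpace ℝ (Fin (d j)) → ℝ)
    (β : ℝ) (xk : ∀ i, EuclideanSpace ℝ (Fin (m i))) (yk : ∀ j, EuclideanSpace ℝ (Fin (d j)))
    (L : EuclideanSpace ℝ (Fin n)) (j : Fin q) (η : EuclideanSpace ℝ (Fin (d j))) :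
    Lag A B c f g β xk (Function.update yk j η) L
      = g j η + ((∑ i, f i (xk i)) + ((∑ l, g l (yk l)) - g j (yk j)))
        - ⟪L, mv (B j) η + (sA A xk + sA B yk - mv (B j) (yk j) - c)⟫
        + β / 2 * ‖mv (B j) η + (sA A xk + sA B yk - mv (B j) (yk j) - c)‖ ^ 2 := by
  unfold Lag
  rw [sum_comp_update g yk j η]
  have hB : sA B (Function.update yk j η) = (sA B yk) - mv (B j) (yk j) + mv (B j) η := by
    unfold sA; exact sum_comp_update (fun l v => mv (B l) v) yk j η
  rw [hB]
  have h2 : sA A xk + (sA B yk - mv (B j) (yk j) + mv (B j) η) - c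
      = mv (B j) η + (sA A xk + sA B yk - mv (B j) (yk j) - c) := by abel
  rw [h2]; ring

lemma per_block {n mm : ℕ} (T : Matrix (Fin n) (Fin mm) ℝ)
    (zu z1 zs : EuclideanSpace ℝ (Fin mm)) (G Z ls : EuclideanSpace ℝ (Fin n)) (cc : ℝ)
    (hG : G + ls = -(Z + cc • mv T (zu - z1))) :
    ⟪mv T zs - mv T z1, G⟫ + ⟪z1 - zs, -(mv Tᵀ ls)⟫
      = ⟪mv T (zu - zs) - mv T (zu - z1), Z + cc • mv T (zu - z1)⟫ := by
  have t1 : ⟪z1 - zs, -(mv Tᵀ ls)⟫ = ⟪mv T zs - mv T z1, ls⟫ := by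
    calc ⟪z1 - zs, -(mv Tᵀ ls)⟫ = -⟪z1 - zs, mv Tᵀ ls⟫ := by rw [inner_neg_right]
      _ = -⟪mv T (z1 - zs), ls⟫ := by rw [inner_mv]
      _ = ⟪mv T zs - mv T z1, ls⟫ := by
          rw [mv_sub, ← inner_neg_left]; congr 1; abel
  rw [t1, ← inner_add_right, hG]
  rw [show mv T (zu - zs) - mv T (zu - z1) = -(mv T zs - mv T z1) from by
    rw [mv_sub, mv_sub]; abel]
  rw [inner_neg_left, inner_neg_right]
lemma key_ident {E : Type*} [NormedAddCommGroup E] [InnerProductSpace ℝ E]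
    (β σ1 σ2 τ s : ℝ) (hβ : β ≠ 0) (hτs : τ + s ≠ 0)
    (P1 P2 P3 Q1 Q2 Q3 : ℝ) (sa se sb sn vl : E) :
    (β * ((σ1+1)*P1 - ‖sa‖^2) + (σ2+1)*β*Q1 - τ*s/(τ+s)*β*‖sb‖^2
      - 2*τ/(τ+s)*⟪sb, vl⟫ + 1/(β*(τ+s))*‖vl‖^2)
    - (β * ((σ1+1)*(P1-2*P2+P3) - ‖sa-se‖^2) + (σ2+1)*β*(Q1-2*Q2+Q3)
      - τ*s/(τ+s)*β*‖sb-sn‖^2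
      - 2*τ/(τ+s)*⟪sb-sn, vl - (τ+s)•(β•(sa-se+sb)) + (s*β)•sn⟫
      + 1/(β*(τ+s))*‖vl - (τ+s)•(β•(sa-se+sb)) + (s*β)•sn‖^2)
    - (β * ((σ1+1)*P3 - ‖se‖^2) + (σ2+1)*β*Q3 - s*β*‖sn‖^2
      + 2*(s-1)*⟪sn, β•(sa-se+sb)⟫ + (2-τ-s)/β*‖β•(sa-se+sb)‖^2)
    = 2 * (⟪sa-se, (vl - β•(sa-se+sb)) - β•se⟫ + β*(σ1+1)*(P2-P3)
      + ⟪sb-sn, (vl - β•(sa-se+sb)) - τ•(β•(sa-se+sb))⟫ + β*(σ2+1)*(Q2-Q3)) := by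
  simp only [← real_inner_self_eq_norm_sq]
  simp only [inner_sub_left, inner_sub_right, inner_add_left, inner_add_right,
    real_inner_smul_left, real_inner_smul_right]
  simp only [real_inner_comm se sa, real_inner_comm sb sa, real_inner_comm sb se,
    real_inner_comm sn sa, real_inner_comm sn se, real_inner_comm sn sb,
    real_inner_comm vl sa, real_inner_comm vl se, real_inner_comm vl sb,
    real_inner_comm vl sn]
  field_simp
  ring

set_option maxHeartbeats 1000000 in
/-- contraction of GS-ADMM toward any solution `w* ∈ M*`:
`‖w^{k+1} − w*‖_H² ≤ ‖w^k − w*‖_H² − ‖w^k − w̃^k‖_G²`. -/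
theorem stmt8
    {p q n : ℕ} (hp : 1 ≤ p) (hq : 1 ≤ q)
    {m : Fin p → ℕ} {d : Fin q → ℕ}
    (A : ∀ i, Matrix (Fin n) (Fin (m i)) ℝ)
    (B : ∀ j, Matrix (Fin n) (Fin (d j)) ℝ)
    (hA : ∀ i, LinearIndependent ℝ (fun l => (A i)ᵀ l))
    (hB : ∀ j, LinearIndependent ℝ (fun l => (B j)ᵀ l))
    (c : EuclideanSpace ℝ (Fin n))
    (X : ∀ i, Set (EuclideanSpace ℝ (Fin (m i))))
    (Y : ∀ j, Set (EuclideanSpace ℝ (Fin (d j))))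
    (hXne : ∀ i, (X i).Nonempty) (hXcl : ∀ i, IsClosed (X i)) (hXcv : ∀ i, Convex ℝ (X i))
    (hYne : ∀ j, (Y j).Nonempty) (hYcl : ∀ j, IsClosed (Y j)) (hYcv : ∀ j, Convex ℝ (Y j))
    (f : ∀ i, EuclideanSpace ℝ (Fin (m i)) → ℝ)
    (g : ∀ j, EuclideanSpace ℝ (Fin (d j)) → ℝ)
    (hf : ∀ i, ConvexOn ℝ Set.univ (f i))
    (hg : ∀ j, ConvexOn ℝ Set.univ (g j))
    (β σ1 σ2 τ s : ℝ) (hβ : 0 < β)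
    (x : ℕ → ∀ i, EuclideanSpace ℝ (Fin (m i)))
    (y : ℕ → ∀ j, EuclideanSpace ℝ (Fin (d j)))
    (lam lamh : ℕ → EuclideanSpace ℝ (Fin n))
    (hxmin : ∀ k i, x (k+1) i ∈ X i ∧ ∀ z ∈ X i,
      Lag A B c f g β (Function.update (x k) i (x (k+1) i)) (y k) (lam k)
          + σ1 * β / 2 * ‖mv (A i) (x (k+1) i - x k i)‖ ^ 2
        ≤ Lag A B c f g β (Function.update (x k) i z) (y k) (lam k)
          + σ1 * β / 2 * ‖mv (A i) (z - x k i)‖ ^ 2)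
    (hlamh : ∀ k, lamh k = lam k - (τ * β) • (sA A (x (k+1)) + sA B (y k) - c))
    (hymin : ∀ k j, y (k+1) j ∈ Y j ∧ ∀ z ∈ Y j,
      Lag A B c f g β (x (k+1)) (Function.update (y k) j (y (k+1) j)) (lamh k)
          + σ2 * β / 2 * ‖mv (B j) (y (k+1) j - y k j)‖ ^ 2
        ≤ Lag A B c f g β (x (k+1)) (Function.update (y k) j z) (lamh k)
          + σ2 * β / 2 * ‖mv (B j) (z - y k j)‖ ^ 2)
    (hlam : ∀ k, lam (k+1) = lamh k - (s * β) • (sA A (x (k+1)) + sA B (y (k+1)) - c))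
    (hτs : 0 < τ + s)
    (xs : ∀ i, EuclideanSpace ℝ (Fin (m i)))
    (ys : ∀ j, EuclideanSpace ℝ (Fin (d j)))
    (ls : EuclideanSpace ℝ (Fin n))
    (hxs : ∀ i, xs i ∈ X i) (hys : ∀ j, ys j ∈ Y j)
    (hsol : ∀ (xx : ∀ i, EuclideanSpace ℝ (Fin (m i)))
        (yy : ∀ j, EuclideanSpace ℝ (Fin (d j)))
        (ll : EuclideanSpace ℝ (Fin n)),
        (∀ i, xx i ∈ X i) → (∀ j, yy j ∈ Y j) →
        (∑ i, f i (xx i)) + (∑ j, g j (yy j))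
            - ((∑ i, f i (xs i)) + (∑ j, g j (ys j)))
          + ((∑ i, ⟪xx i - xs i, -(mv (A i)ᵀ ls)⟫)
            + (∑ j, ⟪yy j - ys j, -(mv (B j)ᵀ ls)⟫)
            + ⟪ll - ls, sA A xs + sA B ys - c⟫) ≥ 0) :
    ∀ k : ℕ,
      Hform A B β σ1 σ2 τ s (fun i => x (k+1) i - xs i)
          (fun j => y (k+1) j - ys j) (lam (k+1) - ls)
        ≤ Hform A B β σ1 σ2 τ s (fun i => x k i - xs i)
            (fun j => y k j - ys j) (lam k - ls)
          - Gform A B β σ1 σ2 τ s (fun i => x k i - x (k+1) i)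
              (fun j => y k j - y (k+1) j)
              (lam k - (lam k - β • (sA A (x (k+1)) + sA B (y k) - c))) := by
  -- feasibility of the solution point
  have hc : sA A xs + sA B ys = c := by
    have h0 := hsol xs ys (ls - (sA A xs + sA B ys - c)) hxs hys
    simp only [sub_self, inner_zero_left, Finset.sum_const_zero, add_zero, zero_add] at h0
    have h1 : (ls - (sA A xs + sA B ys - c)) - ls = -(sA A xs + sA B ys - c) := by abel
    rw [h1, inner_neg_left] at h0
    have h2 : ⟪sA A xs + sA B ys - c, sA A xs + sA B ys - c⟫ ≤ (0:ℝ) := by linarith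
    have h3 : sA A xs + sA B ys - c = 0 := real_inner_self_nonpos.mp h2
    have h4 := sub_eq_zero.mp h3
    exact h4
  intro k
  obtain ⟨sa, hsa⟩ : ∃ v, v = sA A (fun i => x k i - xs i) := ⟨_, rfl⟩
  obtain ⟨se, hse⟩ : ∃ v, v = sA A (fun i => x k i - x (k+1) i) := ⟨_, rfl⟩
  obtain ⟨sb, hsb⟩ : ∃ v, v = sA B (fun j => y k j - ys j) := ⟨_, rfl⟩
  obtain ⟨sn, hsn⟩ : ∃ v, v = sA B (fun j => y k j - y (k+1) j) := ⟨_, rfl⟩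
  obtain ⟨P1, hP1⟩ : ∃ v, v = ∑ i, ‖mv (A i) (x k i - xs i)‖^2 := ⟨_, rfl⟩
  obtain ⟨P2, hP2⟩ : ∃ v, v = ∑ i, ⟪mv (A i) (x k i - xs i), mv (A i) (x k i - x (k+1) i)⟫ := ⟨_, rfl⟩
  obtain ⟨P3, hP3⟩ : ∃ v, v = ∑ i, ‖mv (A i) (x k i - x (k+1) i)‖^2 := ⟨_, rfl⟩
  obtain ⟨Q1, hQ1⟩ : ∃ v, v = ∑ j, ‖mv (B j) (y k j - ys j)‖^2 := ⟨_, rfl⟩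
  obtain ⟨Q2, hQ2⟩ : ∃ v, v = ∑ j, ⟪mv (B j) (y k j - ys j), mv (B j) (y k j - y (k+1) j)⟫ := ⟨_, rfl⟩
  obtain ⟨Q3, hQ3⟩ : ∃ v, v = ∑ j, ‖mv (B j) (y k j - y (k+1) j)‖^2 := ⟨_, rfl⟩
  -- basic relations
  have hse2 : sA A (x k) = se + sA A (x (k+1)) := by
    rw [hse]; simp only [sA_sub]; abel
  have hsa2 : sA A (fun i => x (k+1) i - xs i) = sa - se := by
    rw [hsa, hse]; simp only [sA_sub]; abel
  have hsb2 : sA B (fun j => y (k+1) j - ys j) = sb - sn := by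
    rw [hsb, hsn]; simp only [sA_sub]; abel
  have hX1 : sA A (x (k+1)) + sA B (y k) - c = sa - se + sb := by
    rw [hsa, hse, hsb]; simp only [sA_sub]; rw [← hc]; abel
  have hX2 : sA A (x (k+1)) + sA B (y (k+1)) - c = sa - se + sb - sn := by
    rw [hsa, hse, hsb, hsn]; simp only [sA_sub]; rw [← hc]; abel
  have hlamnew : lam (k+1) - ls = lam k - ls - (τ+s) • (β • (sa - se + sb)) + (s*β) • sn := by
    rw [hlam k, hlamh k, hX1, hX2]; module
  -- variational inequalities for the x-blocks
  have hVIx : ∀ i, 0 ≤ f i (xs i) - f i (x (k+1) i)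
      + ⟪mv (A i) (xs i) - mv (A i) (x (k+1) i),
        -(lam k) + β • (mv (A i) (x (k+1) i)
            + (sA A (x k) - mv (A i) (x k i) + sA B (y k) - c))
          + σ1 • (β • (mv (A i) (x (k+1) i) - mv (A i) (x k i)))⟫ := by
    intro i
    refine sub_vi (A i) (hXcv i) (hf i) β σ1
      (sA A (x k) - mv (A i) (x k i) + sA B (y k) - c) (mv (A i) (x k i)) (lam k)
      (hxmin k i).1 ?_ (hxs i)
    intro z hz
    have h1 := (hxmin k i).2 z hz
    rw [Lag_update_x A B c f g β (x k) (y k) (lam k) i (x (k+1) i),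
        Lag_update_x A B c f g β (x k) (y k) (lam k) i z, mv_sub, mv_sub] at h1
    linarith
  -- variational inequalities for the y-blocks
  have hVIy : ∀ j, 0 ≤ g j (ys j) - g j (y (k+1) j)
      + ⟪mv (B j) (ys j) - mv (B j) (y (k+1) j),
        -(lamh k) + β • (mv (B j) (y (k+1) j)
            + (sA A (x (k+1)) + sA B (y k) - mv (B j) (y k j) - c))
          + σ2 • (β • (mv (B j) (y (k+1) j) - mv (B j) (y k j)))⟫ := by
    intro j
    refine sub_vi (B j) (hYcv j) (hg j) β σ2
      (sA A (x (k+1)) + sA B (y k) - mv (B j) (y k j) - c) (mv (B j) (y k j)) (lamh k)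
      (hymin k j).1 ?_ (hys j)
    intro z hz
    have h1 := (hymin k j).2 z hz
    rw [Lag_update_y A B c f g β (x (k+1)) (y k) (lamh k) j (y (k+1) j),
        Lag_update_y A B c f g β (x (k+1)) (y k) (lamh k) j z, mv_sub, mv_sub] at h1
    linarith
  -- vector identities for the inner-product arguments
  have hGx : ∀ i, (-(lam k) + β • (mv (A i) (x (k+1) i)
          + (sA A (x k) - mv (A i) (x k i) + sA B (y k) - c))
        + σ1 • (β • (mv (A i) (x (k+1) i) - mv (A i) (x k i)))) + ls
      = -((lam k - ls - β • (sa - se + sb) - β • se)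
          + (β*(σ1+1)) • mv (A i) (x k i - x (k+1) i)) := by
    intro i
    rw [mv_sub, hse2, ← hX1]; module
  have hGy : ∀ j, (-(lamh k) + β • (mv (B j) (y (k+1) j)
          + (sA A (x (k+1)) + sA B (y k) - mv (B j) (y k j) - c))
        + σ2 • (β • (mv (B j) (y (k+1) j) - mv (B j) (y k j)))) + ls
      = -((lam k - ls - β • (sa - se + sb) - τ • (β • (sa - se + sb)))
          + (β*(σ2+1)) • mv (B j) (y k j - y (k+1) j)) := by
    intro j
    rw [mv_sub, hlamh k, ← hX1]; module
  -- summed forms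
  have hsum1 : ∑ i, ⟪mv (A i) (x k i - xs i) - mv (A i) (x k i - x (k+1) i),
        (lam k - ls - β • (sa - se + sb) - β • se)
          + (β*(σ1+1)) • mv (A i) (x k i - x (k+1) i)⟫
      = ⟪sa - se, lam k - ls - β • (sa - se + sb) - β • se⟫ + β*(σ1+1)*(P2 - P3) := by
    have e1 : ∀ i, ⟪mv (A i) (x k i - xs i) - mv (A i) (x k i - x (k+1) i),
          (lam k - ls - β • (sa - se + sb) - β • se)
            + (β*(σ1+1)) • mv (A i) (x k i - x (k+1) i)⟫
        = ⟪mv (A i) (x k i - xs i) - mv (A i) (x k i - x (k+1) i),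
            lam k - ls - β • (sa - se + sb) - β • se⟫
          + β*(σ1+1)*(⟪mv (A i) (x k i - xs i), mv (A i) (x k i - x (k+1) i)⟫
            - ‖mv (A i) (x k i - x (k+1) i)‖^2) := by
      intro i
      rw [inner_add_right, real_inner_smul_right, inner_sub_left, inner_sub_left,
        real_inner_self_eq_norm_sq]
    rw [Finset.sum_congr rfl (fun i _ => e1 i), Finset.sum_add_distrib, ← sum_inner,
      ← Finset.mul_sum, Finset.sum_sub_distrib, Finset.sum_sub_distrib]
    rw [show (∑ i, mv (A i) (x k i - xs i)) - ∑ i, mv (A i) (x k i - x (k+1) i) = sa - se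
      from by rw [hsa, hse]; simp only [sA]]
    rw [← hP2, ← hP3]
  have hsum2 : ∑ j, ⟪mv (B j) (y k j - ys j) - mv (B j) (y k j - y (k+1) j),
        (lam k - ls - β • (sa - se + sb) - τ • (β • (sa - se + sb)))
          + (β*(σ2+1)) • mv (B j) (y k j - y (k+1) j)⟫
      = ⟪sb - sn, lam k - ls - β • (sa - se + sb) - τ • (β • (sa - se + sb))⟫
        + β*(σ2+1)*(Q2 - Q3) := by
    have e1 : ∀ j, ⟪mv (B j) (y k j - ys j) - mv (B j) (y k j - y (k+1) j),
          (lam k - ls - β • (sa - se + sb) - τ • (β • (sa - se + sb)))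
            + (β*(σ2+1)) • mv (B j) (y k j - y (k+1) j)⟫
        = ⟪mv (B j) (y k j - ys j) - mv (B j) (y k j - y (k+1) j),
            lam k - ls - β • (sa - se + sb) - τ • (β • (sa - se + sb))⟫
          + β*(σ2+1)*(⟪mv (B j) (y k j - ys j), mv (B j) (y k j - y (k+1) j)⟫
            - ‖mv (B j) (y k j - y (k+1) j)‖^2) := by
      intro j
      rw [inner_add_right, real_inner_smul_right, inner_sub_left, inner_sub_left,
        real_inner_self_eq_norm_sq]
    rw [Finset.sum_congr rfl (fun j _ => e1 j), Finset.sum_add_distrib, ← sum_inner,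
      ← Finset.mul_sum, Finset.sum_sub_distrib, Finset.sum_sub_distrib]
    rw [show (∑ j, mv (B j) (y k j - ys j)) - ∑ j, mv (B j) (y k j - y (k+1) j) = sb - sn
      from by rw [hsb, hsn]; simp only [sA]]
    rw [← hQ2, ← hQ3]
  -- the combined inequality S ≥ 0
  have hS : 0 ≤ ⟪sa - se, lam k - ls - β • (sa - se + sb) - β • se⟫ + β*(σ1+1)*(P2 - P3)
      + ⟪sb - sn, lam k - ls - β • (sa - se + sb) - τ • (β • (sa - se + sb))⟫
      + β*(σ2+1)*(Q2 - Q3) := by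
    have hA0 : 0 ≤ ∑ i, (f i (xs i) - f i (x (k+1) i)
        + ⟪mv (A i) (xs i) - mv (A i) (x (k+1) i),
          -(lam k) + β • (mv (A i) (x (k+1) i)
              + (sA A (x k) - mv (A i) (x k i) + sA B (y k) - c))
            + σ1 • (β • (mv (A i) (x (k+1) i) - mv (A i) (x k i)))⟫) :=
      Finset.sum_nonneg (fun i _ => hVIx i)
    have hB0 : 0 ≤ ∑ j, (g j (ys j) - g j (y (k+1) j)
        + ⟪mv (B j) (ys j) - mv (B j) (y (k+1) j),
          -(lamh k) + β • (mv (B j) (y (k+1) j)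
              + (sA A (x (k+1)) + sA B (y k) - mv (B j) (y k j) - c))
            + σ2 • (β • (mv (B j) (y (k+1) j) - mv (B j) (y k j)))⟫) :=
      Finset.sum_nonneg (fun j _ => hVIy j)
    have hC0 := hsol (x (k+1)) (y (k+1))
      (lam k - β • (sA A (x (k+1)) + sA B (y k) - c))
      (fun i => (hxmin k i).1) (fun j => (hymin k j).1)
    have hc0 : sA A xs + sA B ys - c = 0 := by rw [hc]; exact sub_self c
    rw [hc0, inner_zero_right] at hC0
    rw [Finset.sum_add_distrib, Finset.sum_sub_distrib] at hA0 hB0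
    have hsplitx : ∑ i, ⟪mv (A i) (x k i - xs i) - mv (A i) (x k i - x (k+1) i),
          (lam k - ls - β • (sa - se + sb) - β • se)
            + (β*(σ1+1)) • mv (A i) (x k i - x (k+1) i)⟫
        = (∑ i, ⟪mv (A i) (xs i) - mv (A i) (x (k+1) i),
            -(lam k) + β • (mv (A i) (x (k+1) i)
                + (sA A (x k) - mv (A i) (x k i) + sA B (y k) - c))
              + σ1 • (β • (mv (A i) (x (k+1) i) - mv (A i) (x k i)))⟫)
          + ∑ i, ⟪x (k+1) i - xs i, -(mv (A i)ᵀ ls)⟫ := by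
      rw [← Finset.sum_add_distrib]
      exact Finset.sum_congr rfl (fun i _ =>
        (per_block (A i) (x k i) (x (k+1) i) (xs i) _ _ ls (β*(σ1+1)) (hGx i)).symm)
    have hsplity : ∑ j, ⟪mv (B j) (y k j - ys j) - mv (B j) (y k j - y (k+1) j),
          (lam k - ls - β • (sa - se + sb) - τ • (β • (sa - se + sb)))
            + (β*(σ2+1)) • mv (B j) (y k j - y (k+1) j)⟫
        = (∑ j, ⟪mv (B j) (ys j) - mv (B j) (y (k+1) j),
            -(lamh k) + β • (mv (B j) (y (k+1) j)
                + (sA A (x (k+1)) + sA B (y k) - mv (B j) (y k j) - c))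
              + σ2 • (β • (mv (B j) (y (k+1) j) - mv (B j) (y k j)))⟫)
          + ∑ j, ⟪y (k+1) j - ys j, -(mv (B j)ᵀ ls)⟫ := by
      rw [← Finset.sum_add_distrib]
      exact Finset.sum_congr rfl (fun j _ =>
        (per_block (B j) (y k j) (y (k+1) j) (ys j) _ _ ls (β*(σ2+1)) (hGy j)).symm)
    linarith [hA0, hB0, hC0, hsum1, hsum2, hsplitx, hsplity]
  -- final algebraic step
  have hP1' : ∑ i, ‖mv (A i) (x (k+1) i - xs i)‖^2 = P1 - 2*P2 + P3 := by
    have e : ∀ i, ‖mv (A i) (x (k+1) i - xs i)‖^2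
        = ‖mv (A i) (x k i - xs i)‖^2
          - 2*⟪mv (A i) (x k i - xs i), mv (A i) (x k i - x (k+1) i)⟫
          + ‖mv (A i) (x k i - x (k+1) i)‖^2 := by
      intro i
      rw [show x (k+1) i - xs i = (x k i - xs i) - (x k i - x (k+1) i) from by abel,
        mv_sub, norm_sub_sq_real]
    rw [Finset.sum_congr rfl (fun i _ => e i), Finset.sum_add_distrib,
      Finset.sum_sub_distrib, ← Finset.mul_sum, ← hP1, ← hP2, ← hP3]
  have hQ1' : ∑ j, ‖mv (B j) (y (k+1) j - ys j)‖^2 = Q1 - 2*Q2 + Q3 := by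
    have e : ∀ j, ‖mv (B j) (y (k+1) j - ys j)‖^2
        = ‖mv (B j) (y k j - ys j)‖^2
          - 2*⟪mv (B j) (y k j - ys j), mv (B j) (y k j - y (k+1) j)⟫
          + ‖mv (B j) (y k j - y (k+1) j)‖^2 := by
      intro j
      rw [show y (k+1) j - ys j = (y k j - ys j) - (y k j - y (k+1) j) from by abel,
        mv_sub, norm_sub_sq_real]
    rw [Finset.sum_congr rfl (fun j _ => e j), Finset.sum_add_distrib,
      Finset.sum_sub_distrib, ← Finset.mul_sum, ← hQ1, ← hQ2, ← hQ3]
  have hfin := key_ident β σ1 σ2 τ s (ne_of_gt hβ) (ne_of_gt hτs) P1 P2 P3 Q1 Q2 Q3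
    sa se sb sn (lam k - ls)
  simp only [Hform, Gform]
  rw [hP1', hQ1', hsa2, hsb2, hlamnew, hX1]
  rw [show lam k - (lam k - β • (sa - se + sb)) = β • (sa - se + sb) from by abel]
  rw [← hP1, ← hP3, ← hQ1, ← hQ3, ← hsa, ← hse, ← hsb, ← hsn]
  linarith [hfin, hS]
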